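/- Let 0̂ denote the least element of IP(n) (the partition into singletons with every block open). For any (π,S) ∈ IP(n), the Möbius function of IP(n) satisfies: μ(0̂,(π,S)) = (−1)^{n−|S|} · Π_{V ∈ S} (|V|−1)! if every closed block of π is a singleton, and μ(0̂,(π,S)) = 0 otherwise. Here |S| denotes the number of open blocks. -/

import Mathlib

open Finset
open scoped Classical

/-- A partition of `Fin n`, given by its (finite) set of blocks. -/
def IsPartition {n : ℕ} (P : Finset (Finset (Fin n))) : Prop :=
  (∀ B ∈ P, B.Nonempty) ∧ ∀ i : Fin n, ∃! B : Finset (Fin n), B ∈ P ∧ i ∈ B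

/-- The order on incomplete partitions `(π, S)` (where `S ⊆ π` is the set of open
blocks): `(π,S) ≤ (σ,T)` iff every closed block of `π` is a closed block of `σ`, and
the restriction of `π` to the union of its open blocks refines the corresponding
restriction of `σ` (equivalently, every open block of `π` is contained in a block
of `σ`). -/
def IPle {n : ℕ} (p q : Finset (Finset (Fin n)) × Finset (Finset (Fin n))) : Prop :=
  (∀ U ∈ p.1, U ∉ p.2 → U ∈ q.1 ∧ U ∉ q.2) ∧ ∀ B ∈ p.2, ∃ C ∈ q.1, B ⊆ C

/-- Incomplete partitions: pairs `(π, S)` with `π` a partition of `Fin n` and `S ⊆ π`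
the set of open blocks. -/
abbrev IP (n : ℕ) :=
  {p : Finset (Finset (Fin n)) × Finset (Finset (Fin n)) // IsPartition p.1 ∧ p.2 ⊆ p.1}

namespace IPAux

open Equiv Equiv.Perm

variable {n : ℕ}

/-- The orbit of `i` under a permutation `w`, as a finset. -/
noncomputable def orb (w : Perm (Fin n)) (i : Fin n) : Finset (Fin n) :=
  univ.filter fun j => w.SameCycle i j

/-- The orbit partition of a permutation. -/
noncomputable def blocksOf (w : Perm (Fin n)) : Finset (Finset (Fin n)) :=
  univ.image (orb w)

/-- The claimed Möbius value. -/
noncomputable def fval (n : ℕ) (τ : IP n) : ℤ :=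
  if ∀ U ∈ τ.1.1, U ∉ τ.1.2 → U.card = 1
      then (-1) ^ (n - τ.1.2.card) * ∏ V ∈ τ.1.2, ((V.card - 1).factorial : ℤ)
      else 0

lemma mem_orb {w : Perm (Fin n)} {i j : Fin n} : j ∈ orb w i ↔ w.SameCycle i j := by
  simp [orb]

lemma self_mem_orb (w : Perm (Fin n)) (i : Fin n) : i ∈ orb w i :=
  mem_orb.2 (Equiv.Perm.SameCycle.refl _ _)

lemma apply_mem_orb (w : Perm (Fin n)) (i : Fin n) : w i ∈ orb w i :=
  mem_orb.2 ⟨1, by simp⟩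

lemma orb_eq {w : Perm (Fin n)} {i j : Fin n} (h : w.SameCycle i j) :
    orb w i = orb w j := by
  ext k; simp only [mem_orb]
  exact ⟨fun hk => h.symm.trans hk, fun hk => h.trans hk⟩

lemma orb_eq_singleton {w : Perm (Fin n)} {i : Fin n} (h : w i = i) : orb w i = {i} := by
  ext j
  simp only [mem_orb, Finset.mem_singleton]
  constructor
  · rintro ⟨k, rfl⟩
    exact Equiv.Perm.zpow_apply_eq_self_of_apply_eq_self h k
  · rintro rfl; exact Equiv.Perm.SameCycle.refl _ _

lemma orb_singleton_iff {w : Perm (Fin n)} {i : Fin n} : orb w i = {i} ↔ w i = i := by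
  refine ⟨fun h => ?_, orb_eq_singleton⟩
  have := apply_mem_orb w i
  rw [h, Finset.mem_singleton] at this
  exact this

lemma orb_subset_support {w : Perm (Fin n)} {i : Fin n} (h : w i ≠ i) :
    orb w i ⊆ w.support := by
  intro j hj
  rw [Equiv.Perm.mem_support]
  intro hfix
  apply h
  have h1 : i ∈ orb w j := mem_orb.2 (mem_orb.1 hj).symm
  rw [orb_eq_singleton hfix, Finset.mem_singleton] at h1
  rw [h1]
  exact hfix

lemma isCycleOn_orb (w : Perm (Fin n)) (i : Fin n) : w.IsCycleOn (orb w i) := by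
  constructor
  · refine ⟨?_, w.injective.injOn, ?_⟩
    · intro j hj
      simp only [Finset.coe_filter, Set.mem_setOf_eq, orb] at hj ⊢
      exact ⟨Finset.mem_univ _, hj.2.trans ⟨1, by simp⟩⟩
    · intro j hj
      simp only [Finset.coe_filter, Set.mem_setOf_eq, orb] at hj ⊢
      refine ⟨w⁻¹ j, ⟨Finset.mem_univ _, hj.2.trans ⟨-1, by simp⟩⟩, by simp⟩
  · intro x hx y hy
    simp only [Finset.mem_coe, mem_orb] at hx hy
    exact hx.symm.trans hy

lemma blocksOf_isPartition (w : Perm (Fin n)) : IsPartition (blocksOf w) := by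
  constructor
  · intro B hB
    obtain ⟨i, _, rfl⟩ := Finset.mem_image.1 hB
    exact ⟨i, self_mem_orb w i⟩
  · intro i
    refine ⟨orb w i, ⟨Finset.mem_image_of_mem _ (Finset.mem_univ i), self_mem_orb w i⟩, ?_⟩
    rintro B ⟨hB, hiB⟩
    obtain ⟨a, _, rfl⟩ := Finset.mem_image.1 hB
    exact orb_eq (mem_orb.1 hiB)

lemma partition_unique {P : Finset (Finset (Fin n))} (hP : IsPartition P)
    {B C : Finset (Fin n)} (hB : B ∈ P) (hC : C ∈ P) {i : Fin n} (hiB : i ∈ B)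
    (hiC : i ∈ C) : B = C :=
  ((hP.2 i).unique ⟨hB, hiB⟩ ⟨hC, hiC⟩)

lemma partition_pairwiseDisjoint {P : Finset (Finset (Fin n))} (hP : IsPartition P) :
    (P : Set (Finset (Fin n))).PairwiseDisjoint id := by
  intro B hB C hC hne
  simp only [Function.onFun, id]
  rw [Finset.disjoint_left]
  intro i hiB hiC
  exact hne (partition_unique hP hB hC hiB hiC)

lemma partition_card_le {P : Finset (Finset (Fin n))} (hP : IsPartition P) :
    P.card ≤ n := by
  calc P.card = ∑ _B ∈ P, 1 := by simp
  _ ≤ ∑ B ∈ P, B.card := by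
      apply Finset.sum_le_sum
      intro B hB
      exact Finset.card_pos.2 (hP.1 B hB)
  _ = (P.biUnion id).card := by
      rw [Finset.card_biUnion (fun B hB C hC hne => partition_pairwiseDisjoint hP hB hC hne)]
      rfl
  _ ≤ (univ : Finset (Fin n)).card := Finset.card_le_card (Finset.subset_univ _)
  _ = n := by simp

lemma neg_one_pow_congr {a b : ℕ} (h : a % 2 = b % 2) : ((-1 : ℤ)) ^ a = (-1) ^ b := by
  rw [← Nat.div_add_mod a 2, ← Nat.div_add_mod b 2, pow_add, pow_add, pow_mul, pow_mul]
  norm_num [h]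

lemma neg_one_pow_sub {a b : ℕ} (h : b ≤ a) :
    ((-1 : ℤ)) ^ (a - b) = (-1) ^ a * (-1) ^ b := by
  have h1 : ((-1 : ℤ)) ^ (a - b) * (-1) ^ b = (-1) ^ a := by
    rw [← pow_add]
    congr 1
    omega
  have h2 : ((-1 : ℤ)) ^ b * (-1) ^ b = 1 := by
    rw [← pow_add]
    exact Even.neg_one_pow ⟨b, rfl⟩
  calc ((-1 : ℤ)) ^ (a - b) = (-1) ^ (a - b) * ((-1) ^ b * (-1) ^ b) := by rw [h2, mul_one]
  _ = ((-1) ^ (a - b) * (-1) ^ b) * (-1) ^ b := by ring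
  _ = (-1) ^ a * (-1) ^ b := by rw [h1]

lemma card_blocksOf_one : (blocksOf (1 : Perm (Fin n))).card = n := by
  have : blocksOf (1 : Perm (Fin n)) = univ.image (fun i : Fin n => ({i} : Finset (Fin n))) := by
    apply Finset.image_congr
    intro i _
    exact orb_eq_singleton rfl
  rw [this, Finset.card_image_of_injective _ (fun a b h => by simpa using h)]
  simp

lemma card_blocksOf_add (w : Perm (Fin n)) :
    (blocksOf w).card + w.support.card
      = ((blocksOf w).filter fun B => 2 ≤ B.card).card + n := by
  have hsplit := Finset.card_filter_add_card_filter_not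
    (s := blocksOf w) (p := fun B => 2 ≤ B.card)
  have hsing : ((blocksOf w).filter fun B => ¬ 2 ≤ B.card).card
      = (univ \ w.support).card := by
    symm
    apply Finset.card_bij (fun i _ => ({i} : Finset (Fin n)))
    · intro i hi
      rw [Finset.mem_sdiff] at hi
      have hfix : w i = i := by
        have := hi.2
        rw [Equiv.Perm.mem_support, not_not] at this
        exact this
      rw [Finset.mem_filter]
      refine ⟨?_, by simp⟩
      rw [← orb_eq_singleton hfix]
      exact Finset.mem_image_of_mem _ (Finset.mem_univ i)
    · intro i _ j _ h
      simpa using h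
    · intro B hB
      rw [Finset.mem_filter] at hB
      obtain ⟨hB1, hB2⟩ := hB
      obtain ⟨a, _, rfl⟩ := Finset.mem_image.1 hB1
      have hcard : (orb w a).card = 1 := by
        have h1 : 1 ≤ (orb w a).card := Finset.card_pos.2 ⟨a, self_mem_orb w a⟩
        omega
      obtain ⟨b, hb⟩ := Finset.card_eq_one.1 hcard
      have hab : a = b := by
        have := self_mem_orb w a
        rw [hb, Finset.mem_singleton] at this
        exact this
      subst hab
      have hfix : w a = a := orb_singleton_iff.1 hb
      refine ⟨a, ?_, hb.symm⟩
      rw [Finset.mem_sdiff]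
      exact ⟨Finset.mem_univ a, by rw [Equiv.Perm.mem_support, not_not]; exact hfix⟩
  have hsn : w.support.card ≤ n := by
    have := Finset.card_le_card (Finset.subset_univ w.support)
    simpa using this
  have hsd : (univ \ w.support).card = n - w.support.card := by
    rw [Finset.card_sdiff_of_subset (Finset.subset_univ _)]
    simp
  omega

lemma orb_mul_left {σ τ : Perm (Fin n)} (h : σ.Disjoint τ) {i : Fin n} (hi : σ i ≠ i) :
    orb (σ * τ) i = orb σ i := by
  have hτi : τ i = i := (h i).resolve_left hi
  have hzpow : ∀ k : ℤ, ((σ * τ) ^ k) i = (σ ^ k) i := by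
    intro k
    rw [h.commute.mul_zpow]
    simp only [Equiv.Perm.mul_apply]
    rw [Equiv.Perm.zpow_apply_eq_self_of_apply_eq_self hτi]
  ext j
  simp only [mem_orb, Equiv.Perm.SameCycle]
  constructor
  · rintro ⟨k, hk⟩; exact ⟨k, by rw [← hzpow k]; exact hk⟩
  · rintro ⟨k, hk⟩; exact ⟨k, by rw [hzpow k]; exact hk⟩

lemma orb_mul_right {σ τ : Perm (Fin n)} (h : σ.Disjoint τ) {i : Fin n} (hi : σ i = i) :
    orb (σ * τ) i = orb τ i := by
  have hzpow : ∀ k : ℤ, ((σ * τ) ^ k) i = (τ ^ k) i := by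
    intro k
    rw [h.commute.mul_zpow]
    simp only [Equiv.Perm.mul_apply]
    by_cases hτi : τ i = i
    · rw [Equiv.Perm.zpow_apply_eq_self_of_apply_eq_self hτi,
        Equiv.Perm.zpow_apply_eq_self_of_apply_eq_self hi]
    · have hmoved : τ ((τ ^ k) i) ≠ (τ ^ k) i := by
        intro hfix
        have h1 : i ∈ orb τ ((τ ^ k) i) := mem_orb.2 ⟨-k, by simp⟩
        rw [orb_eq_singleton hfix, Finset.mem_singleton] at h1
        rw [← h1] at hfix
        exact hτi hfix
      have : σ ((τ ^ k) i) = (τ ^ k) i := (h ((τ ^ k) i)).resolve_right hmoved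
      exact Equiv.Perm.zpow_apply_eq_self_of_apply_eq_self this k
  ext j
  simp only [mem_orb, Equiv.Perm.SameCycle]
  constructor
  · rintro ⟨k, hk⟩; exact ⟨k, by rw [← hzpow k]; exact hk⟩
  · rintro ⟨k, hk⟩; exact ⟨k, by rw [hzpow k]; exact hk⟩

lemma two_le_card_orb_iff {w : Perm (Fin n)} {i : Fin n} :
    2 ≤ (orb w i).card ↔ w i ≠ i := by
  constructor
  · intro h2 hfix
    rw [orb_eq_singleton hfix] at h2
    simp at h2
  · intro hmov
    by_contra h2
    have h1 : 1 ≤ (orb w i).card := Finset.card_pos.2 ⟨i, self_mem_orb w i⟩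
    have hcard : (orb w i).card = 1 := by omega
    obtain ⟨b, hb⟩ := Finset.card_eq_one.1 hcard
    have hib : i = b := by
      have := self_mem_orb w i
      rw [hb, Finset.mem_singleton] at this
      exact this
    exact hmov (orb_singleton_iff.1 (hib ▸ hb))

lemma ntB_mul {σ τ : Perm (Fin n)} (h : σ.Disjoint τ) :
    (blocksOf (σ * τ)).filter (fun B => 2 ≤ B.card)
      = (blocksOf σ).filter (fun B => 2 ≤ B.card)
        ∪ (blocksOf τ).filter (fun B => 2 ≤ B.card) := by
  ext B
  simp only [Finset.mem_union, Finset.mem_filter]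
  constructor
  · rintro ⟨hB, h2⟩
    obtain ⟨a, _, rfl⟩ := Finset.mem_image.1 hB
    by_cases ha : σ a = a
    · right
      rw [orb_mul_right h ha] at h2 ⊢
      exact ⟨Finset.mem_image_of_mem _ (Finset.mem_univ a), h2⟩
    · left
      rw [orb_mul_left h ha] at h2 ⊢
      exact ⟨Finset.mem_image_of_mem _ (Finset.mem_univ a), h2⟩
  · rintro (⟨hB, h2⟩ | ⟨hB, h2⟩)
    · obtain ⟨a, _, rfl⟩ := Finset.mem_image.1 hB
      have ha : σ a ≠ a := two_le_card_orb_iff.1 h2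
      rw [← orb_mul_left h ha] at h2 ⊢
      exact ⟨Finset.mem_image_of_mem _ (Finset.mem_univ a), h2⟩
    · obtain ⟨a, _, rfl⟩ := Finset.mem_image.1 hB
      have ha : τ a ≠ a := two_le_card_orb_iff.1 h2
      have hσa : σ a = a := (h a).resolve_right ha
      rw [← orb_mul_right h hσa] at h2 ⊢
      exact ⟨Finset.mem_image_of_mem _ (Finset.mem_univ a), h2⟩

lemma ntB_disjoint {σ τ : Perm (Fin n)} (h : σ.Disjoint τ) :
    Disjoint ((blocksOf σ).filter (fun B => 2 ≤ B.card))
      ((blocksOf τ).filter (fun B => 2 ≤ B.card)) := by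
  rw [Finset.disjoint_left]
  intro B hBσ hBτ
  rw [Finset.mem_filter] at hBσ hBτ
  obtain ⟨a, _, rfl⟩ := Finset.mem_image.1 hBσ.1
  have ha : σ a ≠ a := two_le_card_orb_iff.1 hBσ.2
  have hsub1 : orb σ a ⊆ σ.support := orb_subset_support ha
  obtain ⟨b, _, hborb⟩ := Finset.mem_image.1 hBτ.1
  have hb : τ b ≠ b := two_le_card_orb_iff.1 (hborb ▸ hBτ.2)
  have hsub2 : orb σ a ⊆ τ.support := hborb ▸ orb_subset_support hb
  have := Finset.disjoint_left.1 h.disjoint_support (hsub1 (self_mem_orb σ a))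
  exact this (hsub2 (self_mem_orb σ a))

lemma card_blocksOf_mul {σ τ : Perm (Fin n)} (h : σ.Disjoint τ) :
    (blocksOf (σ * τ)).card + n = (blocksOf σ).card + (blocksOf τ).card := by
  have h1 := card_blocksOf_add (σ * τ)
  have h2 := card_blocksOf_add σ
  have h3 := card_blocksOf_add τ
  have h4 : ((blocksOf (σ * τ)).filter fun B => 2 ≤ B.card).card
      = ((blocksOf σ).filter fun B => 2 ≤ B.card).card
        + ((blocksOf τ).filter fun B => 2 ≤ B.card).card := by
    rw [ntB_mul h, Finset.card_union_of_disjoint (ntB_disjoint h)]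
  have h5 := h.card_support_mul
  omega

/-- Sign in terms of the number of orbits. -/
lemma sign_eq_blocksOf (w : Perm (Fin n)) :
    ((Equiv.Perm.sign w : ℤˣ) : ℤ) = (-1) ^ n * (-1) ^ (blocksOf w).card := by
  induction w using Equiv.Perm.cycle_induction_on with
  | base_one =>
    rw [Equiv.Perm.sign_one, card_blocksOf_one, ← pow_add]
    symm
    rw [Units.val_one]
    exact Even.neg_one_pow ⟨n, rfl⟩
  | base_cycles σ hσ =>
    have hnt : (blocksOf σ).filter (fun B => 2 ≤ B.card) = {σ.support} := by
      ext B
      simp only [Finset.mem_filter, Finset.mem_singleton]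
      constructor
      · rintro ⟨hB, h2⟩
        obtain ⟨a, _, rfl⟩ := Finset.mem_image.1 hB
        have ha : σ a ≠ a := two_le_card_orb_iff.1 h2
        apply Finset.Subset.antisymm (orb_subset_support ha)
        intro j hj
        rw [Equiv.Perm.mem_support] at hj
        exact mem_orb.2 (hσ.sameCycle ha hj)
      · rintro rfl
        obtain ⟨a, ha, -⟩ := id hσ
        have horb : orb σ a = σ.support := by
          apply Finset.Subset.antisymm (orb_subset_support ha)
          intro j hj
          rw [Equiv.Perm.mem_support] at hj
          exact mem_orb.2 (hσ.sameCycle ha hj)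
        constructor
        · rw [← horb]
          exact Finset.mem_image_of_mem _ (Finset.mem_univ a)
        · exact hσ.two_le_card_support
    have hadd := card_blocksOf_add σ
    rw [hnt, Finset.card_singleton] at hadd
    have hs2 : 2 ≤ σ.support.card := hσ.two_le_card_support
    have hsn : σ.support.card ≤ n := by
      have := Finset.card_le_card (Finset.subset_univ σ.support)
      simpa using this
    have hc : (blocksOf σ).card = n + 1 - σ.support.card := by omega
    rw [hσ.sign]
    push_cast
    have h1 : (-(-1 : ℤ) ^ σ.support.card) = (-1) ^ (σ.support.card + 1) := by
      rw [pow_succ]; ring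
    rw [h1, ← pow_add]
    exact neg_one_pow_congr (by omega)
  | induction_disjoint σ τ hd _ ihσ ihτ =>
    rw [Equiv.Perm.sign_mul, Units.val_mul, ihσ, ihτ]
    have hc := card_blocksOf_mul hd
    have h1 : ((-1 : ℤ)) ^ n * (-1) ^ (blocksOf σ).card
          * ((-1) ^ n * (-1) ^ (blocksOf τ).card)
        = (-1) ^ (n + (blocksOf σ).card + (n + (blocksOf τ).card)) := by
      simp only [pow_add]
    have h2 : ((-1 : ℤ)) ^ n * (-1) ^ (blocksOf (σ * τ)).card
        = (-1) ^ (n + (blocksOf (σ * τ)).card) := (pow_add _ _ _).symm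
    rw [h1, h2]
    exact neg_one_pow_congr (by omega)

/-- Number of cyclic permutations supported on `s`. -/
lemma card_cycles_on (s : Finset (Fin n)) :
    (univ.filter fun w : Perm (Fin n) =>
      w.IsCycleOn (s : Set (Fin n)) ∧ ∀ x, x ∉ s → w x = x).card
      = (s.card - 1).factorial := by
  rcases s.eq_empty_or_nonempty with rfl | hs
  · have : (univ.filter fun w : Perm (Fin n) =>
        w.IsCycleOn ((∅ : Finset (Fin n)) : Set (Fin n)) ∧ ∀ x, x ∉ (∅ : Finset (Fin n)) → w x = x)
        = {1} := by
      ext w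
      simp only [Finset.mem_filter, Finset.mem_univ, true_and, Finset.mem_singleton,
        Finset.notMem_empty, Finset.coe_empty]
      constructor
      · rintro ⟨_, h2⟩
        exact Equiv.ext fun x => h2 x (fun h => h)
      · rintro rfl
        exact ⟨Equiv.Perm.isCycleOn_empty, fun x _ => rfl⟩
    rw [this]
    simp
  · set a := s.min' hs with ha
    have haS : a ∈ s := s.min'_mem hs
    have hm1 : 1 ≤ s.card := Finset.card_pos.2 hs
    set P : Perm (Fin n) → Prop :=
      fun w => w.IsCycleOn (s : Set (Fin n)) ∧ ∀ x, x ∉ s → w x = x with hPdef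
    have hcard1 : (univ.filter fun w : Perm (Fin n) => P w).card
        = Fintype.card {w : Perm (Fin n) // P w} := (Fintype.card_subtype _).symm
    rw [hcard1]
    -- the forward map to embeddings
    have hmem : ∀ (w : {w : Perm (Fin n) // P w}) (k : Fin (s.card - 1)),
        ((w.1 ^ ((k : ℕ) + 1)) a) ∈ s.erase a := by
      intro w k
      have hk : (k : ℕ) + 1 < s.card := by have := k.2; omega
      rw [Finset.mem_erase]
      constructor
      · intro hfix
        have := (w.2.1.pow_apply_eq haS).1 hfix
        have := Nat.le_of_dvd (by omega) this
        omega
      · exact (w.2.1.1.perm_pow _).mapsTo haS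
    let F : {w : Perm (Fin n) // P w} → (Fin (s.card - 1) ↪ {x : Fin n // x ∈ s.erase a}) :=
      fun w => ⟨fun k => ⟨(w.1 ^ ((k : ℕ) + 1)) a, hmem w k⟩, by
        intro k l hkl
        have h1 : ((k : ℕ) + 1) ≡ ((l : ℕ) + 1) [MOD s.card] :=
          (w.2.1.pow_apply_eq_pow_apply haS).1 (congrArg Subtype.val hkl)
        have hk := k.2; have hl := l.2
        have : (k : ℕ) + 1 = (l : ℕ) + 1 := Nat.ModEq.eq_of_lt_of_lt h1 (by omega) (by omega)
        exact Fin.ext (by omega)⟩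
    have hbij : Function.Bijective F := by
      constructor
      · -- injective
        intro w w' hww
        have hFco : ∀ k : Fin (s.card - 1), (w.1 ^ ((k : ℕ) + 1)) a = (w'.1 ^ ((k : ℕ) + 1)) a := by
          intro k
          have := congrArg (fun e => ((e k : {x : Fin n // x ∈ s.erase a}) : Fin n)) hww
          exact this
        have hPOW : ∀ j : ℕ, j ≤ s.card → (w.1 ^ j) a = (w'.1 ^ j) a := by
          intro j hj
          rcases Nat.eq_zero_or_pos j with rfl | hj0
          · simp
          rcases eq_or_lt_of_le hj with rfl | hjlt
          · rw [w.2.1.pow_card_apply haS, w'.2.1.pow_card_apply haS]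
          · have hk : j - 1 < s.card - 1 := by omega
            have := hFco ⟨j - 1, hk⟩
            simpa [Nat.sub_add_cancel hj0] using this
        apply Subtype.ext
        apply Equiv.ext
        intro x
        by_cases hx : x ∈ s
        · obtain ⟨j, hjlt, hjx⟩ := w.2.1.exists_pow_eq haS hx
          have h1 : (w.1 ^ (j + 1)) a = (w'.1 ^ (j + 1)) a := hPOW (j + 1) (by omega)
          have h2 : (w.1 ^ j) a = (w'.1 ^ j) a := hPOW j (by omega)
          calc w.1 x = (w.1 ^ (j + 1)) a := by
                rw [pow_succ']
                simp only [Equiv.Perm.mul_apply]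
                rw [← hjx]
          _ = (w'.1 ^ (j + 1)) a := h1
          _ = w'.1 x := by
                rw [pow_succ']
                simp only [Equiv.Perm.mul_apply]
                rw [← h2, hjx]
        · rw [w.2.2 x hx, w'.2.2 x hx]
      · -- surjective
        intro e
        classical
        set l : List (Fin n) := a :: List.ofFn (fun k : Fin (s.card - 1) => (e k : Fin n)) with hl
        have hlen : l.length = s.card := by
          simp [hl]
          omega
        have hesub : ∀ k : Fin (s.card - 1), ((e k : {x : Fin n // x ∈ s.erase a}) : Fin n) ∈ s.erase a :=
          fun k => (e k).2
        have hnodup : l.Nodup := by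
          rw [hl, List.nodup_cons]
          constructor
          · intro hmem'
            obtain ⟨k, hk⟩ := List.mem_ofFn.1 hmem'
            have := hesub k
            rw [hk] at this
            exact (Finset.mem_erase.1 this).1 rfl
          · rw [List.nodup_ofFn]
            exact fun k l hkl => e.injective (Subtype.ext hkl)
        have hlsub : ∀ x ∈ l, x ∈ s := by
          intro x hx
          rw [hl, List.mem_cons] at hx
          rcases hx with rfl | hx
          · exact haS
          · obtain ⟨k, hk⟩ := List.mem_ofFn.1 hx
            exact Finset.mem_of_mem_erase (hk ▸ hesub k)
        have htofin : l.toFinset = s := by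
          apply Finset.eq_of_subset_of_card_le
          · intro x hx
            exact hlsub x (List.mem_toFinset.1 hx)
          · rw [List.toFinset_card_of_nodup hnodup, hlen]
        have hset : {x | x ∈ l} = (s : Set (Fin n)) := by
          ext x
          simp only [Set.mem_setOf_eq, Finset.mem_coe]
          rw [← htofin, List.mem_toFinset]
        have hPw : P l.formPerm := by
          constructor
          · rw [← hset]
            exact hnodup.isCycleOn_formPerm
          · intro x hx
            by_contra hne
            exact hx (hlsub x (List.mem_of_formPerm_apply_ne hne))
        refine ⟨⟨l.formPerm, hPw⟩, ?_⟩
        apply Function.Embedding.ext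
        intro k
        apply Subtype.ext
        show (l.formPerm ^ ((k : ℕ) + 1)) a = _
        have hk1 : (k : ℕ) + 1 < l.length := by rw [hlen]; have := k.2; omega
        have hidx := List.formPerm_pow_apply_getElem l hnodup ((k : ℕ) + 1) 0 (by rw [hlen]; omega)
        simp only [Nat.zero_add, Nat.mod_eq_of_lt hk1] at hidx
        have h3 : l[(k : ℕ) + 1]'hk1 = ((e k : {x : Fin n // x ∈ s.erase a}) : Fin n) := by
          simp [hl]
        exact hidx.trans h3
    rw [Fintype.card_of_bijective hbij, Fintype.card_embedding_eq, Fintype.card_coe,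
      Finset.card_erase_of_mem haS, Fintype.card_fin, Nat.descFactorial_self]

lemma pow_eqOn {f g : Perm (Fin n)} {V : Finset (Fin n)} (h : ∀ x ∈ V, f x = g x)
    (hg : ∀ x ∈ V, g x ∈ V) : ∀ (j : ℕ), ∀ x ∈ V, (f ^ j) x = (g ^ j) x := by
  intro j
  induction j with
  | zero => simp
  | succ j ihj =>
    intro x hx
    rw [pow_succ, pow_succ, Equiv.Perm.mul_apply, Equiv.Perm.mul_apply, h x hx]
    exact ihj (g x) (hg x hx)

lemma isCycleOn_of_eqOn {f g : Perm (Fin n)} {V : Finset (Fin n)}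
    (h : ∀ x ∈ V, f x = g x) (hg : g.IsCycleOn (V : Set (Fin n))) :
    f.IsCycleOn (V : Set (Fin n)) := by
  have hmap : ∀ x ∈ V, g x ∈ V := fun x hx =>
    Finset.mem_coe.1 (hg.1.mapsTo (Finset.mem_coe.2 hx))
  constructor
  · exact Set.BijOn.congr hg.1 (fun x hx => (h x (Finset.mem_coe.1 hx)).symm)
  · intro x hx y hy
    obtain ⟨j, _, hj⟩ := hg.exists_pow_eq (Finset.mem_coe.1 hx) (Finset.mem_coe.1 hy)
    refine ⟨(j : ℤ), ?_⟩
    rw [zpow_natCast]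
    exact (pow_eqOn h hmap j x (Finset.mem_coe.1 hx)).trans hj

/-- Number of permutations whose cycles are given disjoint sets. -/
lemma card_prod_cycles (F : Finset (Finset (Fin n)))
    (hdisj : (F : Set (Finset (Fin n))).PairwiseDisjoint id) :
    (univ.filter fun w : Perm (Fin n) =>
        (∀ V ∈ F, w.IsCycleOn (V : Set (Fin n))) ∧ ∀ x, (∀ V ∈ F, x ∉ V) → w x = x).card
      = ∏ V ∈ F, (V.card - 1).factorial := by
  induction F using Finset.induction_on with
  | empty =>
    have : (univ.filter fun w : Perm (Fin n) =>
        (∀ V ∈ (∅ : Finset (Finset (Fin n))), w.IsCycleOn (V : Set (Fin n))) ∧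
          ∀ x, (∀ V ∈ (∅ : Finset (Finset (Fin n))), x ∉ V) → w x = x) = {1} := by
      ext w
      simp only [Finset.mem_filter, Finset.mem_univ, true_and, Finset.mem_singleton,
        Finset.notMem_empty, IsEmpty.forall_iff, implies_true, true_and]
      constructor
      · intro h2
        exact Equiv.ext fun x => h2 x trivial
      · rintro rfl
        exact fun x _ => rfl
    rw [this]
    simp
  | @insert V F hVF ih =>
    have hd : ∀ V' ∈ F, Disjoint V V' := by
      intro V' hV'
      have hne : V ≠ V' := fun h => hVF (h ▸ hV')
      exact hdisj (Finset.mem_coe.2 (Finset.mem_insert_self V F))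
        (Finset.mem_coe.2 (Finset.mem_insert_of_mem hV')) hne
    have hdF : (F : Set (Finset (Fin n))).PairwiseDisjoint id :=
      Set.PairwiseDisjoint.subset hdisj (by intro x hx; exact Finset.mem_insert_of_mem hx)
    have hcount := ih hdF
    -- the bijection (c, w') ↦ c * w'
    have hbij : ((univ.filter fun c : Perm (Fin n) =>
          c.IsCycleOn (V : Set (Fin n)) ∧ ∀ x, x ∉ V → c x = x) ×ˢ
        (univ.filter fun w : Perm (Fin n) =>
          (∀ V' ∈ F, w.IsCycleOn (V' : Set (Fin n))) ∧ ∀ x, (∀ V' ∈ F, x ∉ V') → w x = x)).card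
        = (univ.filter fun w : Perm (Fin n) =>
          (∀ V' ∈ insert V F, w.IsCycleOn (V' : Set (Fin n))) ∧
            ∀ x, (∀ V' ∈ insert V F, x ∉ V') → w x = x).card := by
      apply Finset.card_bij (fun q _ => q.1 * q.2)
      · -- maps to
        rintro ⟨c, w'⟩ hq
        simp only [Finset.mem_product, Finset.mem_filter, Finset.mem_univ, true_and] at hq
        obtain ⟨⟨hc1, hc2⟩, hw1, hw2⟩ := hq
        have hfixV : ∀ x ∈ V, w' x = x := by
          intro x hx
          apply hw2
          intro V' hV'
          exact fun hxV' => (Finset.disjoint_left.1 (hd V' hV')) hx hxV'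
        have heqV : ∀ x ∈ V, (c * w') x = c x := by
          intro x hx
          simp only [Equiv.Perm.mul_apply, hfixV x hx]
        have heqF : ∀ V' ∈ F, ∀ x ∈ V', (c * w') x = w' x := by
          intro V' hV' x hx
          have hwx : w' x ∈ V' := Finset.mem_coe.1 ((hw1 V' hV').1.mapsTo (Finset.mem_coe.2 hx))
          have : w' x ∉ V := fun h => (Finset.disjoint_left.1 (hd V' hV')) h hwx
          simp only [Equiv.Perm.mul_apply, hc2 _ this]
        simp only [Finset.mem_filter, Finset.mem_univ, true_and]
        constructor
        · intro V'' hV''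
          rcases Finset.mem_insert.1 hV'' with rfl | hV''
          · exact isCycleOn_of_eqOn heqV hc1
          · exact isCycleOn_of_eqOn (heqF V'' hV'') (hw1 V'' hV'')
        · intro x hx
          have hxV : x ∉ V := hx V (Finset.mem_insert_self V F)
          have hw'x : w' x = x := hw2 x fun V' hV' => hx V' (Finset.mem_insert_of_mem hV')
          simp only [Equiv.Perm.mul_apply, hw'x, hc2 x hxV]
      · -- injective
        rintro ⟨c, w'⟩ hq ⟨d, v'⟩ hr hcd
        simp only [Finset.mem_product, Finset.mem_filter, Finset.mem_univ, true_and] at hq hr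
        obtain ⟨⟨hc1, hc2⟩, hw1, hw2⟩ := hq
        obtain ⟨⟨hd1, hd2⟩, hv1, hv2⟩ := hr
        have hfixV : ∀ x ∈ V, w' x = x := by
          intro x hx
          exact hw2 x fun V' hV' hxV' => (Finset.disjoint_left.1 (hd V' hV')) hx hxV'
        have hfixV' : ∀ x ∈ V, v' x = x := by
          intro x hx
          exact hv2 x fun V' hV' hxV' => (Finset.disjoint_left.1 (hd V' hV')) hx hxV'
        have hceq : c = d := by
          apply Equiv.ext
          intro x
          by_cases hx : x ∈ V
          · have h1 : (c * w') x = c x := by simp [Equiv.Perm.mul_apply, hfixV x hx]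
            have h2 : (d * v') x = d x := by simp [Equiv.Perm.mul_apply, hfixV' x hx]
            rw [← h1, ← h2, hcd]
          · rw [hc2 x hx, hd2 x hx]
        refine Prod.ext hceq ?_
        have := hcd
        rw [hceq] at this
        exact mul_left_cancel this
      · -- surjective
        intro w hw
        simp only [Finset.mem_filter, Finset.mem_univ, true_and] at hw
        obtain ⟨hw1, hw2⟩ := hw
        have hVmem : ∀ x : Fin n, x ∈ (V : Set (Fin n)) ↔ w x ∈ (V : Set (Fin n)) :=
          fun x => (hw1 V (Finset.mem_insert_self V F)).apply_mem_iff.symm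
        set c : Perm (Fin n) := Equiv.Perm.ofSubtype
          (w.subtypePerm (fun x => (hVmem x).symm) : Perm {x : Fin n // x ∈ (V : Set (Fin n))}) with hcdef
        have hcmem : ∀ x ∈ V, c x = w x := by
          intro x hx
          rw [hcdef, Equiv.Perm.ofSubtype_apply_of_mem]
          · rfl
          · exact Finset.mem_coe.2 hx
        have hcnot : ∀ x, x ∉ V → c x = x := by
          intro x hx
          rw [hcdef, Equiv.Perm.ofSubtype_apply_of_not_mem]
          intro h
          exact hx (Finset.mem_coe.1 h)
        have hcinv : ∀ y, y ∉ V → c⁻¹ y = y := by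
          intro y hy
          by_cases hz : c⁻¹ y ∈ V
          · exfalso
            have : c (c⁻¹ y) = w (c⁻¹ y) := hcmem _ hz
            rw [show c (c⁻¹ y) = y from c.apply_symm_apply y] at this
            have : y ∈ (V : Set (Fin n)) := by
              rw [this]
              exact (hVmem _).1 (Finset.mem_coe.2 hz)
            exact hy (Finset.mem_coe.1 this)
          · have h1 := hcnot _ hz
            have h2 : c (c⁻¹ y) = y := c.apply_symm_apply y
            rw [h1] at h2
            exact h2
        refine ⟨⟨c, c⁻¹ * w⟩, ?_, ?_⟩
        · simp only [Finset.mem_product, Finset.mem_filter, Finset.mem_univ, true_and]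
          have hwnotV : ∀ x, x ∉ V → w x ∉ V := by
            intro x hx
            by_cases hxF : ∃ V' ∈ F, x ∈ V'
            · obtain ⟨V', hV', hxV'⟩ := hxF
              have : w x ∈ V' := Finset.mem_coe.1
                ((hw1 V' (Finset.mem_insert_of_mem hV')).1.mapsTo (Finset.mem_coe.2 hxV'))
              exact fun h => (Finset.disjoint_left.1 (hd V' hV')) h this
            · push_neg at hxF
              have : w x = x := hw2 x (by
                intro V' hV'
                rcases Finset.mem_insert.1 hV' with rfl | hV''
                · exact hx
                · exact hxF V' hV'')
              rw [this]
              exact hx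
          have hw'eq : ∀ x, x ∉ V → (c⁻¹ * w) x = w x := by
            intro x hx
            simp only [Equiv.Perm.mul_apply]
            exact hcinv _ (hwnotV x hx)
          have hw'fix : ∀ x ∈ V, (c⁻¹ * w) x = x := by
            intro x hx
            simp only [Equiv.Perm.mul_apply]
            rw [Equiv.Perm.inv_eq_iff_eq]
            exact (hcmem x hx).symm
          refine ⟨⟨isCycleOn_of_eqOn hcmem (hw1 V (Finset.mem_insert_self V F)), hcnot⟩, ?_, ?_⟩
          · intro V' hV'
            have : ∀ x ∈ V', (c⁻¹ * w) x = w x := by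
              intro x hx
              exact hw'eq x fun h => (Finset.disjoint_left.1 (hd V' hV')) h hx
            exact isCycleOn_of_eqOn this (hw1 V' (Finset.mem_insert_of_mem hV'))
          · intro x hx
            by_cases hxV : x ∈ V
            · exact hw'fix x hxV
            · rw [hw'eq x hxV]
              apply hw2
              intro V' hV'
              rcases Finset.mem_insert.1 hV' with rfl | hV''
              · exact hxV
              · exact hx V' hV''
        · simp [mul_inv_cancel_left]
    rw [← hbij, Finset.card_product, Finset.prod_insert hVF, ← hcount, card_cycles_on]

lemma blocksOf_eq_iff {σ : Finset (Finset (Fin n))} (hσ : IsPartition σ)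
    (w : Perm (Fin n)) :
    blocksOf w = σ ↔ ∀ V ∈ σ, w.IsCycleOn (V : Set (Fin n)) := by
  constructor
  · rintro rfl V hV
    obtain ⟨i, _, rfl⟩ := Finset.mem_image.1 hV
    exact isCycleOn_orb w i
  · intro h
    have horb : ∀ i : Fin n, ∀ V ∈ σ, i ∈ V → orb w i = V := by
      intro i V hV hiV
      apply Finset.Subset.antisymm
      · intro j hj
        obtain ⟨k, hk⟩ := mem_orb.1 hj
        have := ((h V hV).1.perm_zpow k).mapsTo (Finset.mem_coe.2 hiV)
        rw [hk] at this
        exact Finset.mem_coe.1 this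
      · intro j hjV
        exact mem_orb.2 ((h V hV).2 (Finset.mem_coe.2 hiV) (Finset.mem_coe.2 hjV))
    ext B
    constructor
    · intro hB
      obtain ⟨i, _, rfl⟩ := Finset.mem_image.1 hB
      obtain ⟨V, ⟨hV, hiV⟩, _⟩ := hσ.2 i
      rw [horb i V hV hiV]
      exact hV
    · intro hB
      obtain ⟨i, hiB⟩ := hσ.1 B hB
      rw [← horb i B hB hiB]
      exact Finset.mem_image_of_mem _ (Finset.mem_univ i)

lemma card_blocksOf_eq {σ : Finset (Finset (Fin n))} (hσ : IsPartition σ) :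
    (univ.filter fun w : Perm (Fin n) => blocksOf w = σ).card
      = ∏ V ∈ σ, (V.card - 1).factorial := by
  rw [← card_prod_cycles σ (partition_pairwiseDisjoint hσ)]
  congr 1
  apply Finset.filter_congr
  intro w _
  rw [blocksOf_eq_iff hσ]
  simp only [iff_iff_implies_and_implies]
  constructor
  · intro h
    refine ⟨h, fun x hx => ?_⟩
    obtain ⟨V, ⟨hV, hxV⟩, _⟩ := hσ.2 x
    exact absurd hxV (hx V hV)
  · exact fun h => h.1

lemma IPle_refl (p : IP n) : IPle p.1 p.1 := by
  refine ⟨fun U hU hU2 => ⟨hU, hU2⟩, fun B hB => ⟨B, p.2.2 hB, subset_rfl⟩⟩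

lemma IPle_trans {a b c : Finset (Finset (Fin n)) × Finset (Finset (Fin n))}
    (hab : IPle a b) (hbc : IPle b c) : IPle a c := by
  constructor
  · intro U hU hU2
    exact hbc.1 U (hab.1 U hU hU2).1 (hab.1 U hU hU2).2
  · intro B hB
    obtain ⟨C, hC, hBC⟩ := hab.2 B hB
    by_cases hC2 : C ∈ b.2
    · obtain ⟨D, hD, hCD⟩ := hbc.2 C hC2
      exact ⟨D, hD, hBC.trans hCD⟩
    · exact ⟨C, (hbc.1 C hC hC2).1, hBC⟩

lemma open_subset_open {a b : IP n} (hab : IPle a.1 b.1) (hba : IPle b.1 a.1) :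
    a.1.2 ⊆ b.1.2 := by
  intro B hB
  obtain ⟨C, hC, hBC⟩ := hab.2 B hB
  obtain ⟨i, hiB⟩ := a.2.1.1 B (a.2.2 hB)
  by_cases hC2 : C ∈ b.1.2
  · obtain ⟨D, hD, hCD⟩ := hba.2 C hC2
    have hBD : B = D := partition_unique a.2.1 (a.2.2 hB) hD hiB (hCD (hBC hiB))
    have : B = C := Finset.Subset.antisymm hBC (hBD ▸ hCD)
    rw [this]; exact hC2
  · obtain ⟨hCa, hCa2⟩ := hba.1 C hC hC2
    have hBC' : B = C := partition_unique a.2.1 (a.2.2 hB) hCa hiB (hBC hiB)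
    exact absurd (hBC' ▸ hB) hCa2

lemma IPle_antisymm {a b : IP n} (hab : IPle a.1 b.1) (hba : IPle b.1 a.1) : a = b := by
  have h2 : a.1.2 = b.1.2 :=
    Finset.Subset.antisymm (open_subset_open hab hba) (open_subset_open hba hab)
  have h1 : a.1.1 = b.1.1 := by
    apply Finset.Subset.antisymm
    · intro U hU
      by_cases hU2 : U ∈ a.1.2
      · exact b.2.2 (h2 ▸ hU2)
      · exact (hab.1 U hU hU2).1
    · intro U hU
      by_cases hU2 : U ∈ b.1.2
      · exact a.2.2 (h2 ▸ hU2)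
      · exact (hba.1 U hU hU2).1
  exact Subtype.ext (Prod.ext h1 h2)

/-- The key combinatorial identity: the sum of `fval` over the interval below `p`
vanishes unless `p` is the bottom element. -/
lemma key (p : IP n)
    (hne : ¬(p.1.1 = univ.image (fun i : Fin n => ({i} : Finset (Fin n)))
        ∧ p.1.2 = univ.image (fun i : Fin n => ({i} : Finset (Fin n))))) :
    ∑ τ ∈ univ.filter (fun τ : IP n => IPle τ.1 p.1), fval n τ = 0 := by
  classical
  obtain ⟨⟨P, S⟩, hP, hS⟩ := p
  simp only at hne ⊢
  set Fp : Finset (Fin n) :=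
    univ.filter (fun i => ({i} : Finset (Fin n)) ∈ P ∧ ({i} : Finset (Fin n)) ∉ S) with hFp
  set Wc : Perm (Fin n) → Prop := fun w => ∀ i : Fin n, ∃ B ∈ P, i ∈ B ∧ w i ∈ B with hWc
  set W : Finset (Perm (Fin n)) := univ.filter Wc with hW
  set X : Finset (Perm (Fin n) × Finset (Fin n)) := W ×ˢ Fp.powerset with hX
  set g : Perm (Fin n) × Finset (Fin n) → ℤ := fun q =>
    (-1) ^ (n - (blocksOf q.1 \ q.2.image (fun i => ({i} : Finset (Fin n)))).card) with hg
  -- invariance of blocks of `P` under elements of `W`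
  have hWsub : ∀ w, Wc w → ∀ {i : Fin n} {C : Finset (Fin n)}, C ∈ P → i ∈ C →
      orb w i ⊆ C := by
    intro w hw i C hC hiC
    intro j hj
    obtain ⟨k, hk⟩ := mem_orb.1 hj
    rw [← hk]
    clear hk hj
    induction k using Int.induction_on with
    | zero => simpa using hiC
    | succ k ihk =>
      have hx : ((w : Perm (Fin n)) ^ ((k : ℤ) + 1)) i = w ((w ^ (k : ℤ)) i) := by
        rw [add_comm, zpow_add, zpow_one, Equiv.Perm.mul_apply]
      rw [hx]
      obtain ⟨B, hB, hxB, hwxB⟩ := hw ((w ^ (k : ℤ)) i)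
      rwa [partition_unique hP hC hB ihk hxB]
    | pred k ihk =>
      have hx : ((w : Perm (Fin n)) ^ (-(k : ℤ) - 1)) i = w⁻¹ ((w ^ (-(k : ℤ))) i) := by
        rw [show (-(k : ℤ) - 1) = -1 + (-(k : ℤ)) by ring, zpow_add, zpow_neg_one,
          Equiv.Perm.mul_apply]
      rw [hx]
      obtain ⟨B, hB, hyB, hwyB⟩ := hw (w⁻¹ ((w ^ (-(k : ℤ))) i))
      rw [show w (w⁻¹ ((w ^ (-(k : ℤ))) i)) = (w ^ (-(k : ℤ))) i from w.apply_symm_apply _] at hwyB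
      rw [partition_unique hP hC hB ihk hwyB]
      exact hyB
  -- fixed points of `W` at closed singletons
  have hWfix : ∀ w, Wc w → ∀ i ∈ Fp, w i = i := by
    intro w hw i hi
    rw [hFp, Finset.mem_filter] at hi
    obtain ⟨B, hB, hiB, hwiB⟩ := hw i
    have : B = {i} := partition_unique hP hB hi.2.1 hiB (Finset.mem_singleton_self i)
    rw [this, Finset.mem_singleton] at hwiB
    exact hwiB
  have hsingimg : ∀ w, Wc w → ∀ M ∈ Fp.powerset,
      M.image (fun i => ({i} : Finset (Fin n))) ⊆ blocksOf w := by
    intro w hw M hM B hB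
    obtain ⟨i, hiM, rfl⟩ := Finset.mem_image.1 hB
    have hfix : w i = i := hWfix w hw i (Finset.mem_powerset.1 hM hiM)
    rw [← orb_eq_singleton hfix]
    exact Finset.mem_image_of_mem _ (Finset.mem_univ i)
  -- the map into incomplete partitions
  set Ψ : Perm (Fin n) × Finset (Fin n) → IP n := fun q =>
    ⟨(blocksOf q.1, blocksOf q.1 \ q.2.image (fun i => ({i} : Finset (Fin n)))),
      blocksOf_isPartition q.1, Finset.sdiff_subset⟩ with hΨ
  have hmaps : ∀ q ∈ X, Ψ q ∈ univ.filter (fun τ : IP n => IPle τ.1 (P, S)) := by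
    rintro ⟨w, M⟩ hq
    rw [hX, Finset.mem_product] at hq
    obtain ⟨hwW, hM⟩ := hq
    rw [hW, Finset.mem_filter] at hwW
    have hw : Wc w := hwW.2
    rw [Finset.mem_filter]
    refine ⟨Finset.mem_univ _, ?_, ?_⟩
    · -- closed blocks are closed singletons of `P`
      intro U hU hU2
      simp only [hΨ, Finset.mem_sdiff, not_and, not_not] at hU2
      have hUM := hU2 hU
      obtain ⟨i, hiM, rfl⟩ := Finset.mem_image.1 hUM
      have hiFp := Finset.mem_powerset.1 hM hiM
      rw [hFp, Finset.mem_filter] at hiFp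
      exact ⟨hiFp.2.1, hiFp.2.2⟩
    · -- open blocks are contained in blocks of `P`
      intro B hB
      have hB' : B ∈ blocksOf w := Finset.mem_sdiff.1 hB |>.1
      obtain ⟨i, _, rfl⟩ := Finset.mem_image.1 hB'
      obtain ⟨C, ⟨hC, hiC⟩, -⟩ := hP.2 i
      exact ⟨C, hC, hWsub w hw hC hiC⟩
  -- Step 1 : fiberwise summation
  have hstep1 : ∑ τ ∈ univ.filter (fun τ : IP n => IPle τ.1 (P, S)), fval n τ
      = ∑ q ∈ X, g q := by
    rw [← Finset.sum_fiberwise_of_maps_to hmaps g]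
    apply Finset.sum_congr rfl
    intro τ hτmem
    rw [Finset.mem_filter] at hτmem
    have hτ : IPle τ.1 (P, S) := hτmem.2
    have hτP := τ.2.1
    have hτS := τ.2.2
    by_cases hgood : ∀ U ∈ τ.1.1, U ∉ τ.1.2 → U.card = 1
    · -- good τ: compute the fiber
      set σ := τ.1.1 with hσdef
      set T := τ.1.2 with hTdef
      set M₀ : Finset (Fin n) := univ.filter
        (fun i => ({i} : Finset (Fin n)) ∈ σ ∧ ({i} : Finset (Fin n)) ∉ T) with hM₀
      have hfiber : X.filter (fun q => Ψ q = τ)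
          = (univ.filter fun w : Perm (Fin n) => blocksOf w = σ) ×ˢ ({M₀} : Finset (Finset (Fin n))) := by
        ext ⟨w, M⟩
        simp only [Finset.mem_filter, hX, Finset.mem_product, hW, Finset.mem_univ, true_and,
          Finset.mem_singleton]
        constructor
        · rintro ⟨⟨hw, hM⟩, hΨq⟩
          have hpair : blocksOf w = σ ∧
              blocksOf w \ M.image (fun i => ({i} : Finset (Fin n))) = T := by
            exact ⟨congrArg (fun x : IP n => x.1.1) hΨq, congrArg (fun x : IP n => x.1.2) hΨq⟩
          refine ⟨hpair.1, ?_⟩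
          -- M = M₀
          ext i
          rw [hM₀, Finset.mem_filter]
          constructor
          · intro hiM
            have hfix : w i = i := hWfix w hw i (Finset.mem_powerset.1 hM hiM)
            have hblock : ({i} : Finset (Fin n)) ∈ blocksOf w := by
              rw [← orb_eq_singleton hfix]
              exact Finset.mem_image_of_mem _ (Finset.mem_univ i)
            refine ⟨Finset.mem_univ _, hpair.1 ▸ hblock, ?_⟩
            rw [← hpair.2]
            simp only [Finset.mem_sdiff, not_and, not_not]
            intro _
            exact Finset.mem_image_of_mem _ hiM
          · rintro ⟨-, hiσ, hiT⟩

            have hblock : ({i} : Finset (Fin n)) ∈ blocksOf w := hpair.1 ▸ hiσ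
            have : ({i} : Finset (Fin n)) ∈ M.image (fun i => ({i} : Finset (Fin n))) := by
              by_contra hnot
              exact hiT (hpair.2 ▸ Finset.mem_sdiff.2 ⟨hblock, hnot⟩)
            obtain ⟨j, hjM, hj⟩ := Finset.mem_image.1 this
            have : j = i := by simpa using hj
            exact this ▸ hjM
        · rintro ⟨hbw, rfl⟩
          have hM₀Fp : M₀ ∈ Fp.powerset := by
            rw [Finset.mem_powerset]
            intro i hi
            rw [hM₀, Finset.mem_filter] at hi
            have := hτ.1 _ hi.2.1 hi.2.2
            rw [hFp, Finset.mem_filter]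
            exact ⟨Finset.mem_univ _, this.1, this.2⟩
          have hwW : Wc w := by
            intro i
            have hiorb : i ∈ orb w i := self_mem_orb w i
            have horbmem : orb w i ∈ σ := hbw ▸ Finset.mem_image_of_mem _ (Finset.mem_univ i)
            by_cases hT : orb w i ∈ T
            · obtain ⟨C, hC, hsub⟩ := hτ.2 _ hT
              exact ⟨C, hC, hsub hiorb, hsub (apply_mem_orb w i)⟩
            · have := hτ.1 _ horbmem hT
              exact ⟨orb w i, this.1, hiorb, apply_mem_orb w i⟩
          refine ⟨⟨hwW, hM₀Fp⟩, ?_⟩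
          apply Subtype.ext
          apply Prod.ext
          · exact hbw
          · -- σ \ image M₀ = T
            show blocksOf w \ M₀.image (fun i => ({i} : Finset (Fin n))) = T
            rw [hbw]
            apply Finset.Subset.antisymm
            · intro B hB
              rw [Finset.mem_sdiff] at hB
              by_contra hBT
              have hcard : B.card = 1 := hgood B hB.1 hBT
              obtain ⟨b, rfl⟩ := Finset.card_eq_one.1 hcard
              apply hB.2
              apply Finset.mem_image_of_mem
              rw [hM₀, Finset.mem_filter]
              exact ⟨Finset.mem_univ _, hB.1, hBT⟩
            · intro B hBT
              rw [Finset.mem_sdiff]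
              refine ⟨hτS hBT, ?_⟩
              intro hBimg
              obtain ⟨j, hjM₀, rfl⟩ := Finset.mem_image.1 hBimg
              rw [hM₀, Finset.mem_filter] at hjM₀
              exact hjM₀.2.2 hBT
      have hconst : ∀ q ∈ X.filter (fun q => Ψ q = τ), g q = (-1) ^ (n - τ.1.2.card) := by
        rintro ⟨w, M⟩ hqmem
        rw [Finset.mem_filter] at hqmem
        have := congrArg (fun x : IP n => x.1.2) hqmem.2
        simp only [hΨ] at this
        rw [hg]
        simp only
        rw [this]
      rw [Finset.sum_congr rfl hconst, Finset.sum_const, hfiber, Finset.card_product,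
        Finset.card_singleton, mul_one, card_blocksOf_eq hτP]
      rw [fval, if_pos hgood]
      have hprodT : (∏ V ∈ τ.1.1, (V.card - 1).factorial : ℤ)
          = ∏ V ∈ τ.1.2, ((V.card - 1).factorial : ℤ) := by
        push_cast
        rw [← Finset.prod_sdiff hτS]
        have hone : ∀ V ∈ τ.1.1 \ τ.1.2, ((V.card - 1).factorial : ℤ) = 1 := by
          intro V hV
          rw [Finset.mem_sdiff] at hV
          rw [hgood V hV.1 hV.2]
          simp
        rw [Finset.prod_congr rfl hone]
        simp
        rfl
      rw [nsmul_eq_mul]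
      push_cast
      rw [← hprodT]
      push_cast
      ring
    · -- bad τ: empty fiber
      have hempty : X.filter (fun q => Ψ q = τ) = ∅ := by
        rw [Finset.filter_eq_empty_iff]
        rintro ⟨w, M⟩ hq hΨq
        apply hgood
        intro U hU hU2
        rw [← hΨq] at hU hU2
        simp only [hΨ, Finset.mem_sdiff, not_and, not_not] at hU hU2
        obtain ⟨i, -, rfl⟩ := Finset.mem_image.1 (hU2 hU)
        simp
      rw [hempty, fval, if_neg hgood, Finset.sum_empty]
  rw [hstep1]
  -- Step 2 : factor the sum
  have hterm : ∀ w ∈ W, ∀ M ∈ Fp.powerset,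
      g (w, M) = ((Equiv.Perm.sign w : ℤˣ) : ℤ) * (-1) ^ M.card := by
    intro w hwW M hM
    rw [hW, Finset.mem_filter] at hwW
    have hw : Wc w := hwW.2
    have himg := hsingimg w hw M hM
    have hcard : (blocksOf w \ M.image (fun i => ({i} : Finset (Fin n)))).card
        = (blocksOf w).card - M.card := by
      rw [Finset.card_sdiff_of_subset himg, Finset.card_image_of_injective _
        (fun a b h => by simpa using h)]
    have hcle : (blocksOf w).card ≤ n := partition_card_le (blocksOf_isPartition w)
    have hmle : M.card ≤ (blocksOf w).card := by
      have := Finset.card_le_card himg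
      rwa [Finset.card_image_of_injective _ (fun a b h => by simpa using h)] at this
    rw [hg]
    simp only
    rw [hcard, sign_eq_blocksOf w]
    have hexp : n - ((blocksOf w).card - M.card) = (n - (blocksOf w).card) + M.card := by
      omega
    rw [hexp, pow_add, neg_one_pow_sub hcle]
  calc ∑ q ∈ X, g q
      = ∑ w ∈ W, ∑ M ∈ Fp.powerset, g (w, M) := by rw [hX]; exact Finset.sum_product _ _ _
  _ = ∑ w ∈ W, ((Equiv.Perm.sign w : ℤˣ) : ℤ) * ∑ M ∈ Fp.powerset, (-1) ^ M.card := by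
      apply Finset.sum_congr rfl
      intro w hw
      rw [Finset.mul_sum]
      exact Finset.sum_congr rfl fun M hM => hterm w hw M hM
  _ = (∑ w ∈ W, ((Equiv.Perm.sign w : ℤˣ) : ℤ)) * ∑ M ∈ Fp.powerset, (-1) ^ M.card := by
      rw [Finset.sum_mul]
  _ = 0 := by
      rcases Fp.eq_empty_or_nonempty with hFpe | hFpne
      · -- no closed singletons: find a big block and use a transposition
        by_cases hbig : ∃ B ∈ P, 2 ≤ B.card
        · obtain ⟨B, hB, hB2⟩ := hbig
          obtain ⟨a, haB, b, hbB, hab⟩ := Finset.one_lt_card.1 hB2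
          have hswapW : ∀ w, Wc w → Wc (Equiv.swap a b * w) := by
            intro w hw i
            obtain ⟨C, hC, hiC, hwiC⟩ := hw i
            refine ⟨C, hC, hiC, ?_⟩
            simp only [Equiv.Perm.mul_apply]
            rcases eq_or_ne (w i) a with h | ha'
            · rw [h, Equiv.swap_apply_left]
              have : C = B := partition_unique hP hC hB (h ▸ hwiC) haB
              rw [this]; exact hbB
            rcases eq_or_ne (w i) b with h | hb'
            · rw [h, Equiv.swap_apply_right]
              have : C = B := partition_unique hP hC hB (h ▸ hwiC) hbB
              rw [this]; exact haB
            · rw [Equiv.swap_apply_of_ne_of_ne ha' hb']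
              exact hwiC
          have hrev : ∑ w ∈ W, ((Equiv.Perm.sign w : ℤˣ) : ℤ)
              = ∑ w ∈ W, -((Equiv.Perm.sign w : ℤˣ) : ℤ) := by
            apply Finset.sum_bij' (fun w _ => Equiv.swap a b * w)
              (fun w _ => Equiv.swap a b * w)
            · intro w hw
              rw [hW, Finset.mem_filter] at hw ⊢
              exact ⟨Finset.mem_univ _, hswapW w hw.2⟩
            · intro w hw
              rw [hW, Finset.mem_filter] at hw ⊢
              exact ⟨Finset.mem_univ _, hswapW w hw.2⟩
            · intro w _
              rw [← mul_assoc, Equiv.swap_mul_self, one_mul]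
            · intro w _
              rw [← mul_assoc, Equiv.swap_mul_self, one_mul]
            · intro w _
              rw [Equiv.Perm.sign_mul, Equiv.Perm.sign_swap hab]
              push_cast
              ring
          have : ∑ w ∈ W, ((Equiv.Perm.sign w : ℤˣ) : ℤ) = 0 := by
            have h2 := hrev
            rw [Finset.sum_neg_distrib] at h2
            linarith
          rw [this, zero_mul]
        · -- all blocks singletons: contradiction with `hne`
          exfalso
          push_neg at hbig
          apply hne
          have hPsing : P = univ.image (fun i : Fin n => ({i} : Finset (Fin n))) := by
            apply Finset.Subset.antisymm
            · intro B hB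
              have h1 : 1 ≤ B.card := Finset.card_pos.2 (hP.1 B hB)
              have h2 : B.card < 2 := by have := hbig B hB; omega
              have : B.card = 1 := by omega
              obtain ⟨b, rfl⟩ := Finset.card_eq_one.1 this
              exact Finset.mem_image_of_mem _ (Finset.mem_univ b)
            · intro B hB
              obtain ⟨i, -, rfl⟩ := Finset.mem_image.1 hB
              obtain ⟨C, ⟨hC, hiC⟩, -⟩ := hP.2 i
              have h1 : 1 ≤ C.card := Finset.card_pos.2 (hP.1 C hC)
              have h2 : C.card < 2 := by have := hbig C hC; omega
              have : C.card = 1 := by omega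
              obtain ⟨c, rfl⟩ := Finset.card_eq_one.1 this
              rw [Finset.mem_singleton] at hiC
              rw [← hiC] at hC
              exact hC
          refine ⟨hPsing, ?_⟩
          rw [← hPsing]
          apply Finset.Subset.antisymm hS
          intro B hB
          rw [hPsing] at hB
          obtain ⟨i, -, rfl⟩ := Finset.mem_image.1 hB
          by_contra hBS
          have : i ∈ Fp := by
            rw [hFp, Finset.mem_filter]
            exact ⟨Finset.mem_univ _, hPsing ▸ hB, hBS⟩
          rw [hFpe] at this
          exact Finset.notMem_empty i this
      · rw [Finset.sum_powerset_neg_one_pow_card_of_nonempty hFpne, mul_zero]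

end IPAux

open IPAux in
theorem stmt3 (n : ℕ) (μ : IP n → IP n → ℤ)
    (hmu1 : ∀ x, μ x x = 1)
    (hmu2 : ∀ x y : IP n, IPle x.1 y.1 → x ≠ y →
      ∑ τ ∈ Finset.univ.filter (fun τ : IP n => IPle x.1 τ.1 ∧ IPle τ.1 y.1),
        μ x τ = 0)
    (z : IP n)
    (hz1 : z.1.1 = Finset.univ.image fun i : Fin n => ({i} : Finset (Fin n)))
    (hz2 : z.1.2 = Finset.univ.image fun i : Fin n => ({i} : Finset (Fin n)))
    (p : IP n) :
    μ z p = if ∀ U ∈ p.1.1, U ∉ p.1.2 → U.card = 1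
      then (-1) ^ (n - p.1.2.card) * ∏ V ∈ p.1.2, ((V.card - 1).factorial : ℤ)
      else 0 := by
  -- The goal is `μ z p = fval n p`.
  show μ z p = fval n p
  -- `z` is the bottom element.
  have hbot : ∀ τ : IP n, IPle z.1 τ.1 := by
    intro τ
    constructor
    · intro U hU hU2
      rw [hz1] at hU; rw [hz2] at hU2; exact absurd hU hU2
    · intro B hB
      rw [hz2] at hB
      obtain ⟨i, _, rfl⟩ := Finset.mem_image.1 hB
      obtain ⟨C, ⟨hC, hiC⟩, _⟩ := τ.2.1.2 i
      exact ⟨C, hC, Finset.singleton_subset_iff.2 hiC⟩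
  have hfz : fval n z = 1 := by
    rw [fval, if_pos]
    · have hcard : z.1.2.card = n := by
        rw [hz2, Finset.card_image_of_injective _ (fun a b h => by
          simpa using h)]
        simp
      have : ∀ V ∈ z.1.2, ((V.card - 1).factorial : ℤ) = 1 := by
        intro V hV
        rw [hz2] at hV
        obtain ⟨i, _, rfl⟩ := Finset.mem_image.1 hV
        simp
      rw [Finset.prod_congr rfl this]
      simp [hcard]
    · intro U hU hU2
      rw [hz1] at hU; rw [hz2] at hU2; exact absurd hU hU2
  -- Strong induction on the size of the lower interval.
  suffices H : ∀ m : ℕ, ∀ p : IP n,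
      (univ.filter fun τ : IP n => IPle τ.1 p.1).card ≤ m → μ z p = fval n p by
    exact H _ p le_rfl
  intro m
  induction m with
  | zero =>
    intro p hp
    exfalso
    have : p ∈ univ.filter fun τ : IP n => IPle τ.1 p.1 := by
      simp [IPle_refl]
    have := Finset.card_pos.2 ⟨p, this⟩
    omega
  | succ m ih =>
    intro p hp
    by_cases hzp : p = z
    · subst hzp; rw [hmu1, hfz]
    · have hkey := key p ?goodcase
      case goodcase =>
        intro ⟨h1, h2⟩
        apply hzp
        apply Subtype.ext
        apply Prod.ext
        · rw [h1, hz1]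
        · rw [h2, hz2]
      have hsum := hmu2 z p (hbot p) (Ne.symm hzp)
      have hfilter : (univ.filter fun τ : IP n => IPle z.1 τ.1 ∧ IPle τ.1 p.1)
          = univ.filter fun τ : IP n => IPle τ.1 p.1 := by
        apply Finset.filter_congr
        intro τ _
        simp only [iff_iff_implies_and_implies]
        exact ⟨fun h => h.2, fun h => ⟨hbot τ, h⟩⟩
      rw [hfilter] at hsum
      have hpmem : p ∈ univ.filter fun τ : IP n => IPle τ.1 p.1 := by
        simp [IPle_refl]
      -- split off `p` from the sums
      rw [← Finset.add_sum_erase _ _ hpmem] at hsum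
      rw [← Finset.add_sum_erase _ _ hpmem] at hkey
      -- apply the induction hypothesis on the remaining terms
      have hihsum : ∀ τ ∈ (univ.filter fun τ : IP n => IPle τ.1 p.1).erase p,
          μ z τ = fval n τ := by
        intro τ hτ
        have hτp : IPle τ.1 p.1 := (Finset.mem_filter.1 (Finset.mem_of_mem_erase hτ)).2
        have hτne : τ ≠ p := Finset.ne_of_mem_erase hτ
        apply ih
        have hss : (univ.filter fun σ : IP n => IPle σ.1 τ.1)
            ⊂ univ.filter fun σ : IP n => IPle σ.1 p.1 := by
          constructor
          · intro σ hσ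
            simp only [Finset.mem_filter, Finset.mem_univ, true_and] at hσ ⊢
            exact IPle_trans hσ hτp
          · intro hsub
            have : p ∈ univ.filter fun σ : IP n => IPle σ.1 τ.1 := hsub hpmem
            simp only [Finset.mem_filter, Finset.mem_univ, true_and] at this
            exact hτne (IPle_antisymm this hτp).symm
        have := Finset.card_lt_card hss
        omega
      rw [Finset.sum_congr rfl hihsum] at hsum
      -- conclude
      have : μ z p = fval n p := by linarith [hsum, hkey]
      exact this
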